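/- If 𝒜 is a unital subalgebra of M_{2ⁿ}(ℂ) spanned by a subgroup of (the image in M_{2ⁿ}(ℂ) of) the n-qubit Pauli group, then dim(𝒜) · dim(𝒜′) = 4ⁿ, where 𝒜′ is the commutant of 𝒜 in M_{2ⁿ}(ℂ). -/

import Mathlib

open Matrix Complex

noncomputable def pauli : Fin 4 → Matrix (Fin 2) (Fin 2) ℂ
  | 0 => 1
  | 1 => !![0, 1; 1, 0]
  | 2 => !![0, -I; I, 0]
  | 3 => !![1, 0; 0, -1]

noncomputable def pauliWord {n : ℕ} (f : Fin n → Fin 4) :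
    Matrix (Fin n → Fin 2) (Fin n → Fin 2) ℂ :=
  Matrix.of fun i j => ∏ k, pauli (f k) (i k) (j k)

noncomputable def PauliSet (n : ℕ) : Set (Matrix (Fin n → Fin 2) (Fin n → Fin 2) ℂ) :=
  {M | ∃ (c : ℂ) (f : Fin n → Fin 4),
    (c = 1 ∨ c = -1 ∨ c = I ∨ c = -I) ∧ M = c • pauliWord f}

set_option maxHeartbeats 1000000

def e4 : Fin 4 → ZMod 2 × ZMod 2 := ![(0,0),(1,0),(1,1),(0,1)]
def e4' : ZMod 2 × ZMod 2 → Fin 4 := fun p =>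
  if p = (0,0) then 0 else if p = (1,0) then 1 else if p = (1,1) then 2 else 3

lemma e4'_e4 : ∀ a, e4' (e4 a) = a := by decide
lemma e4_e4' : ∀ p, e4 (e4' p) = p := by decide

def mul4 (a b : Fin 4) : Fin 4 := e4' (e4 a + e4 b)

lemma e4_mul4 (a b : Fin 4) : e4 (mul4 a b) = e4 a + e4 b := e4_e4' _

lemma mul4_tab : ∀ a b, mul4 a b = ![![0,1,2,3],![1,0,3,2],![2,3,0,1],![3,2,1,0]] a b := by
  decide

noncomputable def ph : Fin 4 → Fin 4 → ℂ := ![![1,1,1,1],![1,1,I,-I],![1,-I,1,I],![1,I,-I,1]]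

lemma pauli_mul_apply (a b : Fin 4) (i j : Fin 2) :
    (∑ c, pauli a i c * pauli b c j) = ph a b * pauli (mul4 a b) i j := by
  simp only [mul4_tab]
  fin_cases a <;> fin_cases b <;> fin_cases i <;> fin_cases j <;>
    simp [pauli, ph, Fin.sum_univ_two, Matrix.one_apply, Matrix.vecHead, Matrix.vecTail] <;>
    (try ring_nf) <;> (try simp [Complex.I_sq]) <;> (try ring)

lemma pauli_pair (a b : Fin 4) :
    (∑ i, ∑ j, pauli a i j * pauli b j i) = if a = b then 2 else 0 := by
  fin_cases a <;> fin_cases b <;>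
    simp [pauli, Fin.sum_univ_two, Matrix.one_apply] <;> (try ring_nf) <;>
    (try simp [Complex.I_sq])

def IsPhase (c : ℂ) : Prop := c = 1 ∨ c = -1 ∨ c = I ∨ c = -I

lemma IsPhase.mul {c d : ℂ} (hc : IsPhase c) (hd : IsPhase d) : IsPhase (c * d) := by
  rcases hc with h | h | h | h <;> rcases hd with h' | h' | h' | h' <;> subst h <;> subst h' <;>
    simp [IsPhase, Complex.I_mul_I] <;> ring_nf <;> simp [Complex.I_sq] <;> tauto

lemma IsPhase.ne_zero {c : ℂ} (hc : IsPhase c) : c ≠ 0 := by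
  rcases hc with h | h | h | h <;> subst h <;> simp [Complex.I_ne_zero]

lemma isPhase_one : IsPhase 1 := Or.inl rfl

lemma isPhase_ph (a b : Fin 4) : IsPhase (ph a b) := by
  fin_cases a <;> fin_cases b <;>
    simp [ph, IsPhase, Matrix.vecHead, Matrix.vecTail]

noncomputable def sgn (x : ZMod 2) : ℂ := if x = 0 then 1 else -1

lemma zmod2_cases : ∀ x : ZMod 2, x = 0 ∨ x = 1 := by decide

lemma sgn_add (x y : ZMod 2) : sgn (x + y) = sgn x * sgn y := by
  have h0 : ((1:ZMod 2) + 1) = 0 := by decide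
  have h1 : ((1:ZMod 2)) ≠ 0 := by decide
  rcases zmod2_cases x with h | h <;> rcases zmod2_cases y with h' | h' <;> subst h <;> subst h' <;>
    simp [sgn, h0, h1]

def b2 (a b : Fin 4) : ZMod 2 := (e4 a).1 * (e4 b).2 + (e4 a).2 * (e4 b).1

lemma b2_tab : ∀ a b, b2 a b = ![![0,0,0,0],![0,0,1,1],![0,1,0,1],![0,1,1,0]] a b := by decide

lemma ph_comm (a b : Fin 4) : ph a b = sgn (b2 a b) * ph b a := by
  simp only [b2_tab]
  fin_cases a <;> fin_cases b <;>
    norm_num [ph, sgn, Matrix.vecHead, Matrix.vecTail, show ((1:ZMod 2) ≠ 0) from by decide]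

variable {n : ℕ}

def wmul (f g : Fin n → Fin 4) : Fin n → Fin 4 := fun k => mul4 (f k) (g k)

noncomputable def PH (f g : Fin n → Fin 4) : ℂ := ∏ k, ph (f k) (g k)

lemma isPhase_PH (f g : Fin n → Fin 4) : IsPhase (PH f g) := by
  unfold PH
  classical
  refine Finset.prod_induction _ IsPhase (fun a b => IsPhase.mul) isPhase_one ?_
  exact fun k _ => isPhase_ph _ _

lemma pauliWord_mul (f g : Fin n → Fin 4) :
    pauliWord f * pauliWord g = PH f g • pauliWord (wmul f g) := by
  ext i j
  rw [Matrix.mul_apply]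
  have h1 : ∀ m : Fin n → Fin 2, pauliWord f i m * pauliWord g m j
      = ∏ k, (pauli (f k) (i k) (m k) * pauli (g k) (m k) (j k)) := by
    intro m
    rw [pauliWord, pauliWord, Matrix.of_apply, Matrix.of_apply, Finset.prod_mul_distrib]
  simp_rw [h1]
  rw [← Fintype.piFinset_univ,
    ← Finset.prod_univ_sum (fun _ : Fin n => (Finset.univ : Finset (Fin 2)))
      (fun k c => pauli (f k) (i k) c * pauli (g k) c (j k))]
  simp_rw [pauli_mul_apply]
  rw [Finset.prod_mul_distrib]
  simp [pauliWord, PH, wmul, Matrix.smul_apply]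

lemma pauliWord_pair (f g : Fin n → Fin 4) :
    (∑ i, ∑ j, pauliWord f i j * pauliWord g j i) = if f = g then (2:ℂ)^n else 0 := by
  have h1 : ∀ i j : Fin n → Fin 2, pauliWord f i j * pauliWord g j i
      = ∏ k, (pauli (f k) (i k) (j k) * pauli (g k) (j k) (i k)) := by
    intro i j
    rw [pauliWord, pauliWord, Matrix.of_apply, Matrix.of_apply, Finset.prod_mul_distrib]
  simp_rw [h1]
  have h2 : ∀ i : Fin n → Fin 2, (∑ j : Fin n → Fin 2,
      ∏ k, (pauli (f k) (i k) (j k) * pauli (g k) (j k) (i k)))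
      = ∏ k, ∑ b : Fin 2, (pauli (f k) (i k) b * pauli (g k) b (i k)) := by
    intro i
    rw [← Fintype.piFinset_univ,
      ← Finset.prod_univ_sum (fun _ : Fin n => (Finset.univ : Finset (Fin 2)))
        (fun k b => pauli (f k) (i k) b * pauli (g k) b (i k))]
  simp_rw [h2]
  rw [← Fintype.piFinset_univ,
    ← Finset.prod_univ_sum (fun _ : Fin n => (Finset.univ : Finset (Fin 2)))
      (fun k a => ∑ b : Fin 2, pauli (f k) a b * pauli (g k) b a)]
  have h3 : ∀ k : Fin n, (∑ a : Fin 2, ∑ b : Fin 2,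
      pauli (f k) a b * pauli (g k) b a) = if f k = g k then 2 else 0 := fun k => pauli_pair _ _
  simp_rw [h3]
  by_cases h : f = g
  · subst h
    simp
  · obtain ⟨k, hk⟩ := Function.ne_iff.mp h
    rw [if_neg h]
    exact Finset.prod_eq_zero (Finset.mem_univ k) (by rw [if_neg hk])

lemma pauliWord_zero : pauliWord (fun _ : Fin n => (0 : Fin 4)) = 1 := by
  ext i j
  have : ∀ k : Fin n, pauli 0 (i k) (j k) = if i k = j k then 1 else 0 := by
    intro k; rw [show pauli 0 = 1 from rfl, Matrix.one_apply]
  rw [pauliWord, Matrix.of_apply, Matrix.one_apply]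
  simp_rw [this]
  rw [Finset.prod_boole]
  simp [funext_iff]

lemma PH_comm (f g : Fin n → Fin 4) :
    PH f g = sgn (∑ k, b2 (f k) (g k)) * PH g f := by
  have hs : ∀ s : Finset (Fin n),
      sgn (∑ k ∈ s, b2 (f k) (g k)) = ∏ k ∈ s, sgn (b2 (f k) (g k)) := by
    intro s
    induction s using Finset.induction with
    | empty => simp [sgn]
    | insert _ _ h ih => rw [Finset.sum_insert h, Finset.prod_insert h, sgn_add, ih]
  rw [hs, PH, PH, ← Finset.prod_mul_distrib]
  exact Finset.prod_congr rfl fun k _ => ph_comm _ _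

lemma mul4_comm : ∀ a b, mul4 a b = mul4 b a := by decide
lemma mul4_cancel : ∀ a b, mul4 (mul4 a b) b = a := by decide

lemma wmul_comm (f g : Fin n → Fin 4) : wmul f g = wmul g f :=
  funext fun k => mul4_comm _ _

lemma wmul_cancel (f g : Fin n → Fin 4) : wmul (wmul f g) g = f :=
  funext fun k => mul4_cancel _ _

lemma pauliWord_linearIndependent (n : ℕ) :
    LinearIndependent ℂ (pauliWord (n := n)) := by
  rw [Fintype.linearIndependent_iff]
  intro c hc f
  let T : Matrix (Fin n → Fin 2) (Fin n → Fin 2) ℂ →ₗ[ℂ] ℂ :=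
  { toFun := fun M => ∑ i, ∑ j, M i j * pauliWord f j i
    map_add' := by
      intro M N
      simp [Matrix.add_apply, add_mul, Finset.sum_add_distrib]
    map_smul' := by
      intro r M
      simp [Matrix.smul_apply, smul_eq_mul, mul_assoc, Finset.mul_sum] }
  have h := congrArg T hc
  rw [map_sum, map_zero] at h
  have hT : ∀ g, T (pauliWord g) = if g = f then (2:ℂ)^n else 0 :=
    fun g => pauliWord_pair g f
  simp only [_root_.map_smul, hT, smul_eq_mul, mul_ite, mul_zero] at h
  rw [Finset.sum_ite_eq' Finset.univ f (fun g => c g * (2:ℂ)^n)] at h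
  simp only [Finset.mem_univ, if_true] at h
  have h2 : ((2:ℂ))^n ≠ 0 := pow_ne_zero _ two_ne_zero
  exact (mul_eq_zero.mp h).resolve_right h2

noncomputable def pauliBasis (n : ℕ) :
    Module.Basis (Fin n → Fin 4) ℂ (Matrix (Fin n → Fin 2) (Fin n → Fin 2) ℂ) :=
  basisOfLinearIndependentOfCardEqFinrank (pauliWord_linearIndependent n) (by
    rw [Module.finrank_matrix]
    simp [Fintype.card_fun]
    rw [show (4:ℕ) = 2*2 from rfl, mul_pow])

lemma coe_pauliBasis (n : ℕ) : ⇑(pauliBasis n) = pauliWord :=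
  coe_basisOfLinearIndependentOfCardEqFinrank _ _

lemma commute_of_PH {n : ℕ} (f g : Fin n → Fin 4) (h : PH f g = PH g f) :
    pauliWord f * pauliWord g = pauliWord g * pauliWord f := by
  rw [pauliWord_mul, pauliWord_mul, h, wmul_comm]

lemma centralizer_span (n : ℕ) (S : Set (Fin n → Fin 4))
    (A : Subalgebra ℂ (Matrix (Fin n → Fin 2) (Fin n → Fin 2) ℂ))
    (hA : Subalgebra.toSubmodule A = Submodule.span ℂ (pauliWord '' S)) :
    Subalgebra.toSubmodule (Subalgebra.centralizer ℂ
        (A : Set (Matrix (Fin n → Fin 2) (Fin n → Fin 2) ℂ))) =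
      Submodule.span ℂ (pauliWord '' {g | ∀ f ∈ S, PH f g = PH g f}) := by
  classical
  apply le_antisymm
  · intro x hx
    have hxc : ∀ a ∈ A, a * x = x * a :=
      (Subalgebra.mem_centralizer_iff ℂ).mp ((Subalgebra.mem_toSubmodule _).mp hx)
    set c : (Fin n → Fin 4) → ℂ := fun f => (pauliBasis n).repr x f with hc
    have hxsum : x = ∑ f, c f • pauliWord f := by
      conv_lhs => rw [← (pauliBasis n).sum_repr x]
      simp only [hc, coe_pauliBasis]
    have main : ∀ f, c f ≠ 0 → ∀ f0 ∈ S, PH f0 f = PH f f0 := by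
      intro f hf f0 hf0
      have hPf0A : pauliWord f0 ∈ A := by
        rw [← Subalgebra.mem_toSubmodule, hA]
        exact Submodule.subset_span ⟨f0, hf0, rfl⟩
      have hcomm := hxc _ hPf0A
      have e1 : x * pauliWord f0 = ∑ g, (c g * PH g f0) • pauliWord (wmul g f0) := by
        rw [hxsum, Finset.sum_mul]
        refine Finset.sum_congr rfl fun g _ => ?_
        rw [smul_mul_assoc, pauliWord_mul, smul_smul]
      have e2 : pauliWord f0 * x = ∑ g, (c g * PH f0 g) • pauliWord (wmul g f0) := by
        rw [hxsum, Finset.mul_sum]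
        refine Finset.sum_congr rfl fun g _ => ?_
        rw [mul_smul_comm, pauliWord_mul, smul_smul, wmul_comm f0 g]
      have e3 : (∑ g, (c g * (PH g f0 - PH f0 g)) • pauliWord (wmul g f0)) = 0 := by
        have h0 : x * pauliWord f0 - pauliWord f0 * x = 0 := sub_eq_zero.mpr hcomm.symm
        rw [e1, e2, ← Finset.sum_sub_distrib] at h0
        rw [← h0]
        refine Finset.sum_congr rfl fun g _ => ?_
        rw [← sub_smul]
        ring_nf
      set E : Equiv.Perm (Fin n → Fin 4) :=
        Function.Involutive.toPerm (fun g => wmul g f0) (fun g => wmul_cancel g f0) with hE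
      have expand : ∑ h, (c (wmul h f0) * (PH (wmul h f0) f0 - PH f0 (wmul h f0)))
          • pauliWord h = 0 := by
        rw [← Equiv.sum_comp E (fun h => (c (wmul h f0) *
          (PH (wmul h f0) f0 - PH f0 (wmul h f0))) • pauliWord h)]
        have hEg : ∀ g, E g = wmul g f0 := fun g => rfl
        simp only [hEg, wmul_cancel]
        exact e3
      have hzero := Fintype.linearIndependent_iff.mp (pauliWord_linearIndependent n)
        _ expand (wmul f f0)
      rw [wmul_cancel] at hzero
      rcases mul_eq_zero.mp hzero with h | h
      · exact absurd h hf
      · exact (sub_eq_zero.mp h).symm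
    rw [hxsum]
    refine Submodule.sum_mem _ fun f _ => ?_
    by_cases hf : c f = 0
    · rw [hf, zero_smul]; exact Submodule.zero_mem _
    · refine Submodule.smul_mem _ _ (Submodule.subset_span ⟨f, ?_, rfl⟩)
      intro f0 hf0
      exact main f hf f0 hf0
  · rw [Submodule.span_le]
    rintro _ ⟨g, hg, rfl⟩
    rw [SetLike.mem_coe, Subalgebra.mem_toSubmodule, Subalgebra.mem_centralizer_iff]
    intro a ha
    have haspan : a ∈ Submodule.span ℂ (pauliWord '' S) := by
      rw [← hA]; exact ha
    clear ha
    induction haspan using Submodule.span_induction with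
    | mem y hy =>
        obtain ⟨f, hf, rfl⟩ := hy
        exact commute_of_PH f g (hg f hf)
    | zero => simp
    | add y z _ _ hy hz => rw [add_mul, mul_add, hy, hz]
    | smul r y _ hy => rw [smul_mul_assoc, mul_smul_comm, hy]

def eW {n : ℕ} (f : Fin n → Fin 4) : Fin n → ZMod 2 × ZMod 2 := fun k => e4 (f k)

lemma e4_injective : Function.Injective e4 := by
  intro a b h
  have := congrArg e4' h
  rwa [e4'_e4, e4'_e4] at this

lemma eW_injective {n : ℕ} : Function.Injective (eW (n := n)) := by
  intro f g h
  funext k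
  exact e4_injective (congrFun h k)

lemma eW_surjective {n : ℕ} : Function.Surjective (eW (n := n)) :=
  fun x => ⟨fun k => e4' (x k), funext fun k => e4_e4' _⟩

lemma eW_wmul {n : ℕ} (f g : Fin n → Fin 4) : eW (wmul f g) = eW f + eW g :=
  funext fun k => e4_mul4 _ _

lemma eW_zero {n : ℕ} : eW (fun _ : Fin n => (0 : Fin 4)) = 0 := by
  funext k
  show e4 0 = 0
  decide

noncomputable def Bform (n : ℕ) :
    LinearMap.BilinForm (ZMod 2) (Fin n → ZMod 2 × ZMod 2) :=
  LinearMap.mk₂ (ZMod 2)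
    (fun x y => ∑ k, ((x k).1 * (y k).2 + (x k).2 * (y k).1))
    (by
      intro x x' y
      rw [← Finset.sum_add_distrib]
      refine Finset.sum_congr rfl fun k _ => ?_
      simp [Prod.fst_add, Prod.snd_add]
      ring)
    (by
      intro c x y
      rw [Finset.smul_sum]
      refine Finset.sum_congr rfl fun k _ => ?_
      simp [Prod.smul_fst, Prod.smul_snd, smul_eq_mul]
      ring)
    (by
      intro x y y'
      rw [← Finset.sum_add_distrib]
      refine Finset.sum_congr rfl fun k _ => ?_
      simp [Prod.fst_add, Prod.snd_add]
      ring)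
    (by
      intro c x y
      rw [Finset.smul_sum]
      refine Finset.sum_congr rfl fun k _ => ?_
      simp [Prod.smul_fst, Prod.smul_snd, smul_eq_mul]
      ring)

lemma Bform_apply {n : ℕ} (x y : Fin n → ZMod 2 × ZMod 2) :
    Bform n x y = ∑ k, ((x k).1 * (y k).2 + (x k).2 * (y k).1) := rfl

lemma Bform_symm {n : ℕ} (x y : Fin n → ZMod 2 × ZMod 2) :
    Bform n x y = Bform n y x := by
  rw [Bform_apply, Bform_apply]
  refine Finset.sum_congr rfl fun k _ => ?_
  ring

lemma Bform_refl {n : ℕ} : (Bform n).IsRefl := by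
  intro x y h
  rwa [Bform_symm]

lemma Bform_nondegenerate {n : ℕ} : (Bform n).Nondegenerate := by
  refine (LinearMap.IsRefl.nondegenerate_iff_separatingLeft (Bform_refl (n := n))).mpr ?_
  intro x hx
  funext k
  have h1 := hx (Pi.single k ((0 : ZMod 2), (1 : ZMod 2)))
  have h2 := hx (Pi.single k ((1 : ZMod 2), (0 : ZMod 2)))
  rw [Bform_apply, Finset.sum_eq_single k
    (fun j _ hj => by simp [Pi.single_eq_of_ne hj]) (by simp)] at h1 h2
  simp only [Pi.single_eq_same, mul_one, mul_zero, add_zero, zero_add] at h1 h2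
  show x k = (0 : ZMod 2 × ZMod 2)
  exact Prod.ext h1 h2

lemma Bform_eW {n : ℕ} (f g : Fin n → Fin 4) :
    Bform n (eW f) (eW g) = ∑ k, b2 (f k) (g k) := rfl

lemma sgn_eq_one_iff (x : ZMod 2) : sgn x = 1 ↔ x = 0 := by
  rcases zmod2_cases x with h | h <;> subst h
  · simp [sgn]
  · rw [sgn, if_neg (by decide : ¬(1:ZMod 2) = 0)]
    constructor
    · intro h; exfalso; norm_num at h
    · intro h; exact absurd h (by decide)

lemma PH_comm_iff {n : ℕ} (f g : Fin n → Fin 4) :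
    PH f g = PH g f ↔ Bform n (eW f) (eW g) = 0 := by
  rw [Bform_eW, ← sgn_eq_one_iff]
  constructor
  · intro h
    have h2 := PH_comm f g
    rw [h] at h2
    have h3 : PH g f ≠ 0 := (isPhase_PH g f).ne_zero
    field_simp at h2
    exact h2.symm
  · intro h
    rw [PH_comm f g, h, one_mul]


/-- If `𝒜` is a unital subalgebra of `M_{2ⁿ}(ℂ)` spanned (as a linear subspace) by a
multiplicatively closed subgroup of the n-qubit Pauli group, then
`dim 𝒜 · dim 𝒜′ = 4ⁿ`, where `𝒜′` is the commutant of `𝒜`. -/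
theorem stmt9 (n : ℕ) (A : Subalgebra ℂ (Matrix (Fin n → Fin 2) (Fin n → Fin 2) ℂ))
    (H : Submonoid (Matrix (Fin n → Fin 2) (Fin n → Fin 2) ℂ))
    (hH : (H : Set (Matrix (Fin n → Fin 2) (Fin n → Fin 2) ℂ)) ⊆ PauliSet n)
    (hspan : Subalgebra.toSubmodule A =
      Submodule.span ℂ (H : Set (Matrix (Fin n → Fin 2) (Fin n → Fin 2) ℂ))) :
    Module.finrank ℂ A *
      Module.finrank ℂ (Subalgebra.centralizer ℂ
        (A : Set (Matrix (Fin n → Fin 2) (Fin n → Fin 2) ℂ))) = 4 ^ n := by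
  classical
  set S : Set (Fin n → Fin 4) := {f | ∃ c : ℂ, IsPhase c ∧ c • pauliWord f ∈ H} with hSdef
  set S' : Set (Fin n → Fin 4) := {g | ∀ f ∈ S, PH f g = PH g f} with hS'def
  have hspan2 : Submodule.span ℂ (H : Set (Matrix (Fin n → Fin 2) (Fin n → Fin 2) ℂ)) =
      Submodule.span ℂ (pauliWord '' S) := by
    apply le_antisymm
    · rw [Submodule.span_le]
      intro h hh
      obtain ⟨c, f, hph, rfl⟩ := hH hh
      have hfS : f ∈ S := ⟨c, hph, hh⟩
      exact Submodule.smul_mem _ _ (Submodule.subset_span ⟨f, hfS, rfl⟩)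
    · rw [Submodule.span_le]
      rintro _ ⟨f, ⟨c, hc, hcH⟩, rfl⟩
      have hP : pauliWord f = c⁻¹ • (c • pauliWord f) := by
        rw [smul_smul, inv_mul_cancel₀ hc.ne_zero, one_smul]
      rw [hP]
      exact Submodule.smul_mem _ _ (Submodule.subset_span hcH)
  have hAS : Subalgebra.toSubmodule A = Submodule.span ℂ (pauliWord '' S) :=
    hspan.trans hspan2
  have hCS := centralizer_span n S A hAS
  have hS_zero : (fun _ : Fin n => (0 : Fin 4)) ∈ S :=
    ⟨1, isPhase_one, by rw [one_smul, pauliWord_zero]; exact H.one_mem⟩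
  have hS_mul : ∀ f ∈ S, ∀ g ∈ S, wmul f g ∈ S := by
    rintro f ⟨c, hc, hcH⟩ g ⟨d, hd, hdH⟩
    refine ⟨c * d * PH f g, (hc.mul hd).mul (isPhase_PH f g), ?_⟩
    have hm := H.mul_mem hcH hdH
    rwa [Matrix.smul_mul, Matrix.mul_smul, pauliWord_mul, smul_smul, smul_smul] at hm
  let G : Submodule (ZMod 2) (Fin n → ZMod 2 × ZMod 2) :=
  { carrier := eW '' S
    add_mem' := by
      rintro x y ⟨f, hf, rfl⟩ ⟨g, hg, rfl⟩
      exact ⟨wmul f g, hS_mul f hf g hg, eW_wmul f g⟩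
    zero_mem' := ⟨_, hS_zero, eW_zero⟩
    smul_mem' := by
      intro c x hx
      rcases zmod2_cases c with h | h <;> subst h
      · rw [zero_smul]; exact ⟨_, hS_zero, eW_zero⟩
      · rw [one_smul]; exact hx }
  have hG' : eW '' S' = ((Bform n).orthogonal G : Set (Fin n → ZMod 2 × ZMod 2)) := by
    ext x
    constructor
    · rintro ⟨g, hg, rfl⟩
      rw [SetLike.mem_coe, LinearMap.BilinForm.mem_orthogonal_iff]
      rintro _ ⟨f, hf, rfl⟩
      exact (PH_comm_iff f g).mp (hg f hf)
    · intro hx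
      obtain ⟨g, rfl⟩ := eW_surjective x
      refine ⟨g, ?_, rfl⟩
      intro f hf
      rw [PH_comm_iff]
      exact (LinearMap.BilinForm.mem_orthogonal_iff.mp hx) _ ⟨f, hf, rfl⟩
  haveI : Fintype ↥S := Fintype.ofFinite _
  haveI : Fintype ↥S' := Fintype.ofFinite _
  haveI : Fintype ↥G := Fintype.ofFinite _
  haveI : Fintype ↥((Bform n).orthogonal G) := Fintype.ofFinite _
  have hdimA : Module.finrank ℂ A = Fintype.card ↥S := by
    rw [← Subalgebra.finrank_toSubmodule, hAS, Set.image_eq_range]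
    exact finrank_span_eq_card
      ((pauliWord_linearIndependent n).comp ((↑) : ↥S → (Fin n → Fin 4))
        Subtype.val_injective)
  have hdimC : Module.finrank ℂ (Subalgebra.centralizer ℂ
      (A : Set (Matrix (Fin n → Fin 2) (Fin n → Fin 2) ℂ))) = Fintype.card ↥S' := by
    rw [← Subalgebra.finrank_toSubmodule, hCS, Set.image_eq_range]
    exact finrank_span_eq_card
      ((pauliWord_linearIndependent n).comp ((↑) : ↥S' → (Fin n → Fin 4))
        Subtype.val_injective)
  have hcard1 : Fintype.card ↥S = Fintype.card ↥G := by
    rw [← Nat.card_eq_fintype_card, ← Nat.card_eq_fintype_card]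
    exact Nat.card_congr (Equiv.Set.image eW S eW_injective)
  have hcard2 : Fintype.card ↥S' = Fintype.card ↥((Bform n).orthogonal G) := by
    rw [← Nat.card_eq_fintype_card, ← Nat.card_eq_fintype_card]
    refine Nat.card_congr ((Equiv.Set.image eW S' eW_injective).trans (Equiv.setCongr hG'))
  have hcardG : Fintype.card ↥G = 2 ^ Module.finrank (ZMod 2) ↥G := by
    rw [Module.card_eq_pow_finrank (K := ZMod 2), ZMod.card]
  have hcardG' : Fintype.card ↥((Bform n).orthogonal G)
      = 2 ^ Module.finrank (ZMod 2) ↥((Bform n).orthogonal G) := by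
    rw [Module.card_eq_pow_finrank (K := ZMod 2), ZMod.card]
  have hF : Module.finrank (ZMod 2) (Fin n → ZMod 2 × ZMod 2) = 2 * n := by
    rw [Module.finrank_pi_fintype]
    simp [Module.finrank_prod, Module.finrank_self, mul_comm]
  have hperp := LinearMap.BilinForm.finrank_orthogonal
    (B := Bform n) Bform_nondegenerate G
  have hle : Module.finrank (ZMod 2) ↥G
      ≤ Module.finrank (ZMod 2) (Fin n → ZMod 2 × ZMod 2) := Submodule.finrank_le G
  rw [hdimA, hdimC, hcard1, hcard2, hcardG, hcardG', ← pow_add, hperp, hF]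
  rw [hF] at hle
  rw [show Module.finrank (ZMod 2) ↥G + (2 * n - Module.finrank (ZMod 2) ↥G) = 2 * n by omega]
  rw [show (4:ℕ) = 2 ^ 2 from rfl, ← pow_mul]
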